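/- Suppose λ, μ ∈ (0,1] satisfy 1 + ln(λ)φ(λ) = 0 and 1 + ln(μ)φ(μ) = 0, where φ : (0,1] → ℝ satisfies cε² ≤ φ ≤ Cε² and |φ(λ) - φ(μ)| ≤ C|λ ln λ - μ ln μ| for constants 0 < c ≤ C independent of ε. Then for ε sufficiently small, λ = μ; i.e., the equation 1 + ln(λ)φ(λ) = 0 has at most one solution. -/

import Mathlib

set_option maxHeartbeats 800000

private lemma aux_false (c C ε : ℝ) (hc : 0 < c) (hcC : c ≤ C) (hε : 0 < ε)
    (hx1 : c ≤ 1 / ε ^ 2) (hx2 : 512 * C ^ 5 / c ^ 3 + 1 ≤ 1 / ε ^ 2)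
    (φ : ℝ → ℝ)
    (hφ : ∀ t ∈ Set.Ioc (0 : ℝ) 1, c * ε ^ 2 ≤ φ t ∧ φ t ≤ C * ε ^ 2)
    (hLip : ∀ lam ∈ Set.Ioc (0 : ℝ) 1, ∀ mu ∈ Set.Ioc (0 : ℝ) 1,
      |φ lam - φ mu| ≤ C * |lam * Real.log lam - mu * Real.log mu|)
    (lam mu : ℝ) (hlam : lam ∈ Set.Ioc (0 : ℝ) 1) (hmu : mu ∈ Set.Ioc (0 : ℝ) 1)
    (h1 : 1 + Real.log lam * φ lam = 0) (h2 : 1 + Real.log mu * φ mu = 0)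
    (hlt : lam < mu) : False := by
  obtain ⟨hlam0, hlam1⟩ := hlam
  obtain ⟨hmu0, hmu1⟩ := hmu
  have hC : 0 < C := lt_of_lt_of_le hc hcC
  have hε2 : (0:ℝ) < ε ^ 2 := by positivity
  set x : ℝ := 1 / ε ^ 2 with hxdef
  clear_value x
  have hx0 : 0 < x := lt_of_lt_of_le hc hx1
  -- L and M
  obtain ⟨L, hlogl⟩ : ∃ L, Real.log lam = -L := ⟨-Real.log lam, by ring⟩
  obtain ⟨M, hlogm⟩ : ∃ M, Real.log mu = -M := ⟨-Real.log mu, by ring⟩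
  -- φ values
  have hφl := hφ lam ⟨hlam0, hlam1⟩
  have hφm := hφ mu ⟨hmu0, hmu1⟩
  have hφl0 : 0 < φ lam := lt_of_lt_of_le (by positivity) hφl.1
  have hφm0 : 0 < φ mu := lt_of_lt_of_le (by positivity) hφm.1
  rw [hlogl] at h1
  rw [hlogm] at h2
  have hLφ : L * φ lam = 1 := by linear_combination -h1
  have hMφ : M * φ mu = 1 := by linear_combination -h2
  have hL0 : 0 < L := by nlinarith [hLφ, hφl0]
  have hM0 : 0 < M := by nlinarith [hMφ, hφm0]
  have hφlval : φ lam = 1 / L := by field_simp; linear_combination hLφ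
  have hφmval : φ mu = 1 / M := by field_simp; linear_combination hMφ
  -- bounds on L, M
  have hLub : L ≤ x / c := by
    have h := hφl.1
    rw [hφlval, le_div_iff₀ hL0] at h
    rw [hxdef, div_div, le_div_iff₀ (by positivity : (0:ℝ) < ε ^ 2 * c)]
    linarith [h, (by ring : L * (ε ^ 2 * c) = c * ε ^ 2 * L)]
  have hMub : M ≤ x / c := by
    have h := hφm.1
    rw [hφmval, le_div_iff₀ hM0] at h
    rw [hxdef, div_div, le_div_iff₀ (by positivity : (0:ℝ) < ε ^ 2 * c)]
    linarith [h, (by ring : M * (ε ^ 2 * c) = c * ε ^ 2 * M)]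
  have hMlb : x / C ≤ M := by
    have h := hφm.2
    rw [hφmval, div_le_iff₀ hM0] at h
    rw [hxdef, div_div, div_le_iff₀ (by positivity : (0:ℝ) < ε ^ 2 * C)]
    linarith [h, (by ring : M * (ε ^ 2 * C) = C * ε ^ 2 * M)]
  -- M < L
  have hML : M < L := by
    have := Real.log_lt_log hlam0 hlt
    rw [hlogl, hlogm] at this
    linarith
  -- mu = exp (-M)
  have hmuexp : mu = Real.exp (-M) := by
    rw [← hlogm, Real.exp_log hmu0]
  set D : ℝ := mu - lam with hDdef
  have hD0 : 0 < D := by rw [hDdef]; linarith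
  -- |φ lam - φ mu| = (L - M)/(L*M)
  have hlhs : |φ lam - φ mu| = (L - M) / (L * M) := by
    rw [hφlval, hφmval, abs_of_nonpos (by
      rw [sub_nonpos, div_le_div_iff₀ hL0 hM0]; linarith)]
    field_simp
    ring
  -- L - M = log (mu/lam)
  have hlogdiv : Real.log (mu / lam) = L - M := by
    rw [Real.log_div (ne_of_gt hmu0) (ne_of_gt hlam0), hlogl, hlogm]; ring
  have hlogdiv2 : Real.log (lam / mu) = M - L := by
    rw [Real.log_div (ne_of_gt hlam0) (ne_of_gt hmu0), hlogl, hlogm]; ring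
  -- lam * (L - M) ≤ D
  have hkey1 : lam * (L - M) ≤ D := by
    have h := Real.log_le_sub_one_of_pos (show 0 < mu / lam by positivity)
    rw [hlogdiv] at h
    have h' := mul_le_mul_of_nonneg_left h (le_of_lt hlam0)
    calc lam * (L - M) ≤ lam * (mu / lam - 1) := h'
    _ = D := by rw [hDdef]; field_simp
  -- D / mu ≤ L - M
  have hkey2 : D / mu ≤ L - M := by
    have h := Real.log_le_sub_one_of_pos (show 0 < lam / mu by positivity)
    rw [hlogdiv2] at h
    have e : D / mu = 1 - lam / mu := by
      rw [hDdef, sub_div, div_self (ne_of_gt hmu0)]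
    linarith
  -- RHS bound
  have hrhs : |lam * Real.log lam - mu * Real.log mu| ≤ D * (M + 1) := by
    have heq : lam * Real.log lam - mu * Real.log mu = D * M + lam * (M - L) := by
      rw [hlogl, hlogm, hDdef]; ring
    rw [heq]
    calc |D * M + lam * (M - L)| ≤ |D * M| + |lam * (M - L)| := abs_add_le _ _
    _ = D * M + lam * (L - M) := by
        rw [abs_of_nonneg (by positivity), abs_of_nonpos
          (mul_nonpos_of_nonneg_of_nonpos (le_of_lt hlam0) (by linarith))]; ring
    _ ≤ D * M + D := by linarith
    _ = D * (M + 1) := by ring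
  -- combine
  have hmain : D / (mu * (L * M)) ≤ C * (D * (M + 1)) := by
    calc D / (mu * (L * M)) = (D / mu) / (L * M) := by
          rw [div_div]
    _ ≤ (L - M) / (L * M) := by gcongr
    _ = |φ lam - φ mu| := hlhs.symm
    _ ≤ C * |lam * Real.log lam - mu * Real.log mu| :=
        hLip lam ⟨hlam0, hlam1⟩ mu ⟨hmu0, hmu1⟩
    _ ≤ C * (D * (M + 1)) := mul_le_mul_of_nonneg_left hrhs (le_of_lt hC)
  have hone : 1 ≤ C * (M + 1) * (mu * (L * M)) := by
    have e1 : D / (mu * (L * M)) = D * (1 / (mu * (L * M))) := by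
      rw [mul_one_div]
    have e2 : C * (D * (M + 1)) = D * (C * (M + 1)) := by ring
    rw [e1, e2] at hmain
    have h3 : 1 / (mu * (L * M)) ≤ C * (M + 1) :=
      le_of_mul_le_mul_left hmain hD0
    rw [div_le_iff₀ (by positivity)] at h3
    linarith [h3, (by ring : C * (M + 1) * (mu * (L * M)) = (C * (M+1)) * (mu * (L * M)))]
  -- upper bound on mu
  have hmuub : mu ≤ 256 * C ^ 4 / x ^ 4 := by
    have ht : (0:ℝ) < x / (4 * C) := by positivity
    have hexp : (x / (4 * C)) ^ 4 ≤ Real.exp (x / C) := by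
      have ha : x / (4 * C) + 1 ≤ Real.exp (x / (4 * C)) := Real.add_one_le_exp _
      have hb : (x / (4 * C)) ^ 4 ≤ (x / (4 * C) + 1) ^ 4 :=
        pow_le_pow_left₀ (le_of_lt ht) (by linarith) 4
      have hc4 : (x / (4 * C) + 1) ^ 4 ≤ Real.exp (x / (4 * C)) ^ 4 :=
        pow_le_pow_left₀ (by positivity) ha 4
      have hd : Real.exp (x / (4 * C)) ^ 4 = Real.exp (x / C) := by
        rw [← Real.exp_nat_mul]
        congr 1
        push_cast
        field_simp
      linarith
    have hmle : mu ≤ Real.exp (-(x / C)) := by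
      rw [hmuexp]
      exact Real.exp_le_exp.mpr (by linarith)
    calc mu ≤ Real.exp (-(x / C)) := hmle
    _ = 1 / Real.exp (x / C) := by rw [Real.exp_neg, one_div]
    _ ≤ 1 / ((x / (4 * C)) ^ 4) := one_div_le_one_div_of_le (by positivity) hexp
    _ = 256 * C ^ 4 / x ^ 4 := by
        rw [div_pow]
        field_simp
        ring
  -- final contradiction
  have hM1 : M + 1 ≤ 2 * x / c := by
    have ha : (1:ℝ) ≤ x / c := (one_le_div hc).mpr hx1
    have hb : 2 * x / c = x / c + x / c := by ring
    linarith
  have hfin : C * (M + 1) * (mu * (L * M)) ≤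
      C * (2 * x / c) * (256 * C ^ 4 / x ^ 4 * (x / c * (x / c))) := by
    gcongr
  have heq2 : C * (2 * x / c) * (256 * C ^ 4 / x ^ 4 * (x / c * (x / c))) =
      512 * C ^ 5 / (c ^ 3 * x) := by
    field_simp
    ring
  rw [heq2] at hfin
  have hlast : 512 * C ^ 5 / (c ^ 3 * x) < 1 := by
    rw [div_lt_one (by positivity)]
    have h512 : 512 * C ^ 5 / c ^ 3 < x := by linarith
    rw [div_lt_iff₀ (by positivity)] at h512
    linarith [h512, (by ring : x * c ^ 3 = c ^ 3 * x)]
  linarith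

/-- Uniqueness of the solution of `1 + ln(λ)φ(λ) = 0`: if `cε² ≤ φ ≤ Cε²` on `(0,1]`
and `|φ(λ) - φ(μ)| ≤ C |λ ln λ - μ ln μ|`, then for `ε` sufficiently small the equation
`1 + ln(λ)φ(λ) = 0` has at most one solution in `(0,1]`. -/
theorem unique_zero_one_add_log_mul (c C : ℝ) (hc : 0 < c) (hcC : c ≤ C) :
    ∃ ε₀ > 0, ∀ ε : ℝ, 0 < ε → ε ≤ ε₀ → ∀ φ : ℝ → ℝ,
      (∀ t ∈ Set.Ioc (0 : ℝ) 1, c * ε ^ 2 ≤ φ t ∧ φ t ≤ C * ε ^ 2) →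
      (∀ lam ∈ Set.Ioc (0 : ℝ) 1, ∀ mu ∈ Set.Ioc (0 : ℝ) 1,
        |φ lam - φ mu| ≤ C * |lam * Real.log lam - mu * Real.log mu|) →
      ∀ lam ∈ Set.Ioc (0 : ℝ) 1, ∀ mu ∈ Set.Ioc (0 : ℝ) 1,
        1 + Real.log lam * φ lam = 0 → 1 + Real.log mu * φ mu = 0 → lam = mu := by
  have hC : 0 < C := lt_of_lt_of_le hc hcC
  set x₀ : ℝ := max c (512 * C ^ 5 / c ^ 3 + 1) with hx₀def
  have hx₀0 : 0 < x₀ := lt_of_lt_of_le hc (le_max_left _ _)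
  refine ⟨Real.sqrt (1 / x₀), by positivity, ?_⟩
  intro ε hε hεle φ hφ hLip lam hlam mu hmu h1 h2
  have hε2 : (0:ℝ) < ε ^ 2 := by positivity
  have hsq : ε ^ 2 ≤ 1 / x₀ := by
    have := pow_le_pow_left₀ hε.le hεle 2
    rwa [Real.sq_sqrt (by positivity)] at this
  have hxge : x₀ ≤ 1 / ε ^ 2 := by
    rw [le_div_iff₀ hx₀0] at hsq
    rw [le_div_iff₀ hε2]
    linarith
  have hx1 : c ≤ 1 / ε ^ 2 := le_trans (le_max_left _ _) hxge
  have hx2 : 512 * C ^ 5 / c ^ 3 + 1 ≤ 1 / ε ^ 2 := le_trans (le_max_right _ _) hxge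
  rcases lt_trichotomy lam mu with h | h | h
  · exact absurd (aux_false c C ε hc hcC hε hx1 hx2 φ hφ hLip lam mu hlam hmu h1 h2 h) id
  · exact h
  · exact absurd (aux_false c C ε hc hcC hε hx1 hx2 φ hφ hLip mu lam hmu hlam h2 h1 h) id
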